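/- For the Boolean state control problem with affine dynamics, no error is incurred by the thresholding process: for every nominal configuration x ∈ ℝ^V (i.e., x_w ∈ {s_{Φ,w}, s_{Ω,w}} for all w ∈ V) and every control vector u ∈ {c₀, c₁}^V, and for every v ∈ V, H( Σ_{w∈V} A_{wv} · ρ_w(τ_w(x_w)) + B_v · χ_v⁻¹(χ_v(u_v)) + h_v − η_v ) = τ_v( (Σ_{w∈V} A_{wv} x_w) + B_v u_v + h_v ); that is, the Boolean dynamics f̃_v := τ_v ∘ f_v ∘ γ_v composed with thresholding agrees exactly with thresholding the true affine dynamics f(x,u) = Ax + Bu + h on all feasible states. -/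

import Mathlib

/-- The Heaviside function: `H(t) = 1` if `t ≥ 0` and `H(t) = 0` if `t < 0`. -/
noncomputable def Heav (t : ℝ) : ℝ := if 0 ≤ t then 1 else 0

theorem boolean_affine_no_thresholding_error
    {V : Type*} [Fintype V]
    (A : V → V → ℝ) (B h η sF sO : V → ℝ)
    (hnom : ∀ v, sF v < η v ∧ η v ≤ sO v)
    (c0 c1 : ℝ) (hc : c0 ≠ c1)
    (x : V → ℝ) (hx : ∀ w, x w = sF w ∨ x w = sO w)
    (u : V → ℝ) (hu : ∀ v, u v = c0 ∨ u v = c1)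
    (v : V) :
    Heav ((∑ w : V, A w v * ((sO w - sF w) * Heav (x w - η w) + sF w))
        + B v * ((c1 - c0) * ((u v - c0) / (c1 - c0)) + c0) + h v - η v)
      = Heav ((∑ w : V, A w v * x w) + B v * u v + h v - η v) := by
  have hρ : ∀ w, (sO w - sF w) * Heav (x w - η w) + sF w = x w := by
    intro w
    rcases hx w with hw | hw
    · have : ¬ (0 ≤ x w - η w) := by
        have := (hnom w).1; rw [hw]; linarith
      rw [Heav, if_neg this, hw]; ring
    · have : (0 : ℝ) ≤ x w - η w := by
        have := (hnom w).2; rw [hw]; linarith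
      rw [Heav, if_pos this, hw]; ring
  have hχ : (c1 - c0) * ((u v - c0) / (c1 - c0)) + c0 = u v := by
    have : c1 - c0 ≠ 0 := sub_ne_zero.mpr hc.symm
    field_simp
    ring
  simp only [hρ, hχ]
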